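/- Let μ ∈ ℂ, ν = π/ℓ, and for large n let z_n be the unique zero of φ(z) = (z−μ)e^{2izℓ} − (z+μ) in the disk D(nν, ν/6). Then z_n = nν − iμ/(nπ) + O(n^{−2}) as n → +∞, and consequently z_n² = n²ν² − 2iμ/ℓ + O(n^{−1}). -/

import Mathlib

open Complex Filter

lemma cabs_sub_le' (a b : ℂ) : ‖a - b‖ ≤ ‖a‖ + ‖b‖ := by
  simpa using norm_sub_le a b

lemma cabs_lower (a b : ℂ) : ‖a‖ - ‖b‖ ≤ ‖a + b‖ := by
  simpa using norm_sub_norm_le a (-b)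

lemma aux_lower {u : ℂ} (hu : ‖u‖ ≤ Real.pi / 3) :
    ‖u‖ ≤ 5 * ‖Complex.exp u - 1‖ := by
  have ht0 : 0 ≤ ‖u‖ := norm_nonneg u
  have htle : ‖u‖ ≤ 1.05 := by nlinarith [Real.pi_lt_d2]
  set t := ‖u‖ with ht
  have hv : ‖u/2‖ ≤ 1 := by
    rw [norm_div]
    simp only [Complex.norm_two]
    linarith
  have h1 : ‖Complex.exp (u/2) - 1 - u/2‖ ≤ ‖u/2‖ ^ 2 :=
    Complex.norm_exp_sub_one_sub_id_le hv
  have hA2 : ‖u/2‖ = t/2 := by rw [norm_div, Complex.norm_two, ht]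
  set A := ‖Complex.exp (u/2) - 1‖ with hA
  set B := ‖Complex.exp (u/2) + 1‖ with hB
  have hA0 : 0 ≤ A := norm_nonneg _
  have hB0 : 0 ≤ B := norm_nonneg _
  have hAlow : t/2 - (t/2)^2 ≤ A := by
    have h2 : ‖u/2‖ ≤ A + ‖Complex.exp (u/2) - 1 - u/2‖ := by
      calc ‖u/2‖
          = ‖(Complex.exp (u/2) - 1) - (Complex.exp (u/2) - 1 - u/2)‖ := by
            congr 1; ring
        _ ≤ _ := cabs_sub_le' _ _
    rw [hA2] at h1 h2
    linarith
  have hAhigh : A ≤ t/2 + (t/2)^2 := by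
    have h2 : A ≤ ‖u/2‖ + ‖Complex.exp (u/2) - 1 - u/2‖ := by
      calc A = ‖u/2 + (Complex.exp (u/2) - 1 - u/2)‖ := by rw [hA]; congr 1; ring
        _ ≤ _ := norm_add_le _ _
    rw [hA2] at h1 h2
    linarith
  have hBlow : 2 - A ≤ B := by
    have h4 : (2:ℝ) = ‖(Complex.exp (u/2) + 1) - (Complex.exp (u/2) - 1)‖ := by
      norm_num
    have h3 : ‖(Complex.exp (u/2) + 1) - (Complex.exp (u/2) - 1)‖ ≤ B + A :=
      cabs_sub_le' _ _
    linarith [h4 ▸ h3]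
  have hprod : ‖Complex.exp u - 1‖ = A * B := by
    have he : Complex.exp (u/2) * Complex.exp (u/2) = Complex.exp u := by
      rw [← Complex.exp_add]; norm_num
    have hid : Complex.exp u - 1 = (Complex.exp (u/2) - 1) * (Complex.exp (u/2) + 1) := by
      rw [← he]; ring
    rw [hid, norm_mul]
  rw [hprod]
  have htsq : t * t ≤ 1.05 * t := mul_le_mul_of_nonneg_right htle ht0
  have hA1 : 0.22 * t ≤ A := by nlinarith
  have hA3 : A ≤ 0.81 := by nlinarith
  have hB1 : 1.19 ≤ B := by linarith
  have hfin : 0.22 * t * 1.19 ≤ A * B := mul_le_mul hA1 hB1 (by norm_num) hA0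
  linarith

set_option maxHeartbeats 1000000 in
/-- Asymptotics of the zeros `z_n` of `φ(z) = (z-μ)e^{2izℓ} - (z+μ)` in the
disks `D(nν, ν/6)`:
`z_n = nν - iμ/(nπ) + O(n⁻²)` and `z_n² = n²ν² - 2iμ/ℓ + O(n⁻¹)`. -/
theorem zeros_asymptotics (ℓ : ℝ) (hℓ : 0 < ℓ) (μ : ℂ) (ν : ℝ) (hν : ν = Real.pi / ℓ)
    (φ : ℂ → ℂ)
    (hφ : φ = fun w => (w - μ) * exp (2 * I * w * ℓ) - (w + μ))
    (z : ℕ → ℂ)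
    (hz : ∀ᶠ n : ℕ in atTop, φ (z n) = 0 ∧ ‖z n - (n : ℂ) * ν‖ < ν / 6) :
    ∃ C > 0,
      (∀ᶠ n : ℕ in atTop,
        ‖z n - ((n : ℂ) * ν - I * μ / ((n : ℂ) * Real.pi))‖ ≤ C / (n : ℝ) ^ 2)
      ∧ (∀ᶠ n : ℕ in atTop,
        ‖(z n) ^ 2 - ((n : ℂ) ^ 2 * (ν : ℂ) ^ 2 - 2 * I * μ / ℓ)‖ ≤ C / (n : ℝ)) := by
  have hπ0 : (0:ℝ) < Real.pi := Real.pi_pos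
  have hπ1 : (1:ℝ) ≤ Real.pi := by linarith [Real.pi_gt_three]
  have hν0 : 0 < ν := by rw [hν]; positivity
  have hνℓ : ν * ℓ = Real.pi := by rw [hν]; field_simp
  have hνℓC : (ν:ℂ) * (ℓ:ℂ) = (Real.pi:ℂ) := by rw [← Complex.ofReal_mul, hνℓ]
  have hℓC : (ℓ:ℂ) ≠ 0 := Complex.ofReal_ne_zero.mpr hℓ.ne'
  have hνC : (ν:ℂ) ≠ 0 := Complex.ofReal_ne_zero.mpr hν0.ne'
  have hπC : ((Real.pi:ℝ):ℂ) ≠ 0 := Complex.ofReal_ne_zero.mpr hπ0.ne'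
  set m := ‖μ‖ with hm
  have hm0 : 0 ≤ m := norm_nonneg μ
  set C₃ := (400*m^2 + 4*m*(m + ν/6)) / (2*ℓ*ν^2) with hC₃
  have hC₃0 : 0 ≤ C₃ := by positivity
  set C₄ := m^2 + 2*(ν+m)*C₃ + C₃^2 with hC₄
  have hC₄0 : 0 ≤ C₄ := by positivity
  have hKev : ∀ᶠ n : ℕ in atTop, (2*(ν/6+m))/ν + 20*m/ν + 1 ≤ (n:ℝ) :=
    tendsto_natCast_atTop_atTop.eventually_ge_atTop _
  have key : ∀ᶠ n : ℕ in atTop,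
      ‖z n - ((n : ℂ) * ν - I * μ / ((n : ℂ) * Real.pi))‖ ≤ C₃ / (n : ℝ) ^ 2 ∧
      ‖(z n) ^ 2 - ((n : ℂ) ^ 2 * (ν : ℂ) ^ 2 - 2 * I * μ / ℓ)‖ ≤ C₄ / (n : ℝ) := by
    filter_upwards [hz, hKev] with n hzn hn
    obtain ⟨hphi0, hlt⟩ := hzn
    have ht1 : (0:ℝ) ≤ (2*(ν/6+m))/ν := by positivity
    have ht2 : (0:ℝ) ≤ 20*m/ν := by positivity
    have h1n : (1:ℝ) ≤ (n:ℝ) := by linarith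
    have hn0R : (0:ℝ) < (n:ℝ) := by linarith
    have hnν0 : (0:ℝ) < (n:ℝ)*ν := by positivity
    have hnν1 : 2*(ν/6+m) ≤ (n:ℝ)*ν := by
      have h := (div_le_iff₀ hν0).mp (by linarith : (2*(ν/6+m))/ν ≤ (n:ℝ))
      linarith
    have hnν2 : 20*m ≤ (n:ℝ)*ν := by
      have h0 : (20*m)/ν ≤ (n:ℝ) := by
        have : (20*m)/ν = 20*m/ν := by ring
        linarith [this]
      have h := (div_le_iff₀ hν0).mp h0
      linarith
    have hnne : n ≠ 0 := by rintro rfl; norm_num at h1n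
    have hnRne : (n:ℝ) ≠ 0 := hn0R.ne'
    have hνne : ν ≠ 0 := hν0.ne'
    have hℓne : ℓ ≠ 0 := hℓ.ne'
    have hnC : ((n:ℕ):ℂ) ≠ 0 := Nat.cast_ne_zero.mpr hnne
    set u : ℂ := 2*I*(z n - (n:ℂ)*ν)*ℓ with hu
    have hsplit : Complex.exp (2*I*(z n)*ℓ) = Complex.exp u := by
      have hcoef : (2:ℂ)*I*(z n)*ℓ = u + (n:ℂ)*(2*Real.pi*I) := by
        rw [hu]; linear_combination (2*I*(n:ℂ))*hνℓC
      rw [hcoef, Complex.exp_add]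
      have h1 : Complex.exp ((n:ℂ)*(2*Real.pi*I)) = 1 := by
        have h2 := Complex.exp_int_mul_two_pi_mul_I (n:ℤ)
        push_cast at h2
        exact h2
      rw [h1, mul_one]
    have hzero : (z n - μ) * Complex.exp u - (z n + μ) = 0 := by
      simp only [hφ] at hphi0
      rw [← hsplit]; exact hphi0
    have h2μ : (z n - μ) * (Complex.exp u - 1) = 2*μ := by linear_combination hzero
    have hzμ_lb : (n:ℝ)*ν/2 ≤ ‖z n - μ‖ := by
      have e1 : ‖(n:ℂ)*ν‖ = (n:ℝ)*ν := by
        rw [norm_mul, Complex.norm_natCast, Complex.norm_real, Real.norm_eq_abs, abs_of_pos hν0]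
      have e2 : ‖(z n - (n:ℂ)*ν) - μ‖ ≤ ν/6 + m := by
        have := cabs_sub_le' (z n - (n:ℂ)*ν) μ
        linarith
      have e3 : z n - μ = (n:ℂ)*ν + ((z n - (n:ℂ)*ν) - μ) := by ring
      have e4 := cabs_lower ((n:ℂ)*ν) ((z n - (n:ℂ)*ν) - μ)
      rw [e1] at e4
      rw [e3]
      linarith
    have hzμ_ne : z n - μ ≠ 0 := by
      intro h
      rw [h, norm_zero] at hzμ_lb
      linarith
    have hExpEq : Complex.exp u - 1 = 2*μ/(z n - μ) := by
      rw [eq_div_iff hzμ_ne]; linear_combination h2μ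
    have habs_exp : ‖Complex.exp u - 1‖ ≤ 4*m/((n:ℝ)*ν) := by
      rw [hExpEq, norm_div, norm_mul, Complex.norm_two]
      calc 2 * m / ‖z n - μ‖ ≤ 2*m / ((n:ℝ)*ν/2) := by gcongr
          _ = 4*m/((n:ℝ)*ν) := by field_simp; ring
    have habs_u_pi3 : ‖u‖ ≤ Real.pi/3 := by
      rw [hu]
      rw [norm_mul, norm_mul, norm_mul, Complex.norm_two, Complex.norm_I, Complex.norm_real, Real.norm_eq_abs,
        abs_of_pos hℓ]
      calc 2 * 1 * ‖z n - (n:ℂ)*ν‖ * ℓ ≤ 2 * 1 * (ν/6) * ℓ := by gcongr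
          _ = Real.pi/3 := by rw [← hνℓ]; ring
    have hu_le : ‖u‖ ≤ 20*m/((n:ℝ)*ν) := by
      have h5 := aux_lower habs_u_pi3
      have h20 : 20*m/((n:ℝ)*ν) = 5*(4*m/((n:ℝ)*ν)) := by ring
      rw [h20]
      calc ‖u‖ ≤ 5 * ‖Complex.exp u - 1‖ := h5
        _ ≤ 5*(4*m/((n:ℝ)*ν)) := by linarith
    have hu1 : ‖u‖ ≤ 1 := by
      refine le_trans hu_le ?_
      rw [div_le_one hnν0]
      exact hnν2
    have hquad : ‖Complex.exp u - 1 - u‖ ≤ (20*m/((n:ℝ)*ν))^2 := by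
      refine le_trans (Complex.norm_exp_sub_one_sub_id_le hu1) ?_
      exact pow_le_pow_left₀ (norm_nonneg u) hu_le 2
    have hdiff1 : ‖u - 2*μ/(z n - μ)‖ ≤ 400*m^2/((n:ℝ)*ν)^2 := by
      rw [← hExpEq, norm_sub_rev]
      refine le_trans hquad (le_of_eq ?_)
      rw [div_pow]
      ring
    have hdiff2 : ‖2*μ/(z n - μ) - 2*μ/((n:ℂ)*ν)‖ ≤ 4*m*(m+ν/6)/((n:ℝ)*ν)^2 := by
      have hid : 2*μ/(z n - μ) - 2*μ/((n:ℂ)*ν)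
          = 2*μ*((n:ℂ)*ν - z n + μ)/((z n - μ)*((n:ℂ)*ν)) := by
        field_simp
        ring
      rw [hid, norm_div, norm_mul, norm_mul, Complex.norm_two]
      have e1 : ‖(n:ℂ)*ν - z n + μ‖ ≤ m + ν/6 := by
        have h1 : (n:ℂ)*ν - z n + μ = μ - (z n - (n:ℂ)*ν) := by ring
        rw [h1]
        have := cabs_sub_le' μ (z n - (n:ℂ)*ν)
        linarith
      have e2 : ‖(z n - μ)*((n:ℂ)*ν)‖ = ‖z n - μ‖ * ((n:ℝ)*ν) := by
        rw [norm_mul, norm_mul, Complex.norm_natCast, Complex.norm_real, Real.norm_eq_abs, abs_of_pos hν0]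
      rw [e2]
      calc 2 * m * ‖(n:ℂ)*ν - z n + μ‖ / (‖z n - μ‖ * ((n:ℝ)*ν))
          ≤ 2 * m * (m + ν/6) / (((n:ℝ)*ν/2) * ((n:ℝ)*ν)) := by gcongr
          _ = 4*m*(m+ν/6)/((n:ℝ)*ν)^2 := by field_simp; ring
    have hnπ0 : ((n:ℂ)*(Real.pi:ℝ)) ≠ 0 := mul_ne_zero hnC hπC
    have hnν0C : ((n:ℂ)*(ν:ℝ)) ≠ 0 := mul_ne_zero hnC hνC
    have hIμ : (2*I*(ℓ:ℂ)) * (I*μ/((n:ℂ)*Real.pi)) = - (2*μ/((n:ℂ)*ν)) := by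
      rw [← hνℓC]
      field_simp
      linear_combination μ * Complex.I_sq
    have keyI0 : (2*I*(ℓ:ℂ)) * (z n - ((n:ℂ)*ν - I*μ/((n:ℂ)*Real.pi)))
        = u - 2*μ/((n:ℂ)*ν) := by
      rw [hu]; linear_combination hIμ
    have keyI : (2*I*(ℓ:ℂ)) * (z n - ((n:ℂ)*ν - I*μ/((n:ℂ)*Real.pi)))
        = (u - 2*μ/(z n - μ)) + (2*μ/(z n - μ) - 2*μ/((n:ℂ)*ν)) := by
      linear_combination keyI0
    have habs2Iℓ : ‖2*I*(ℓ:ℂ)‖ = 2*ℓ := by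
      rw [norm_mul, norm_mul, Complex.norm_two, Complex.norm_I, Complex.norm_real, Real.norm_eq_abs, abs_of_pos hℓ]
      ring
    have hbound1 : ‖z n - ((n:ℂ)*ν - I*μ/((n:ℂ)*Real.pi))‖ ≤ C₃/(n:ℝ)^2 := by
      have h1 : (2*ℓ) * ‖z n - ((n:ℂ)*ν - I*μ/((n:ℂ)*Real.pi))‖
          = ‖(u - 2*μ/(z n - μ)) + (2*μ/(z n - μ) - 2*μ/((n:ℂ)*ν))‖ := by
        rw [← keyI, norm_mul, habs2Iℓ]
      have h2 : ‖(u - 2*μ/(z n - μ)) + (2*μ/(z n - μ) - 2*μ/((n:ℂ)*ν))‖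
          ≤ 400*m^2/((n:ℝ)*ν)^2 + 4*m*(m+ν/6)/((n:ℝ)*ν)^2 :=
        le_trans (norm_add_le _ _) (by gcongr)
      rw [← h1, ← add_div] at h2
      rw [le_div_iff₀ (by positivity : (0:ℝ) < ((n:ℝ)*ν)^2)] at h2
      have h3 : ‖z n - ((n:ℂ)*ν - I*μ/((n:ℂ)*Real.pi))‖
          ≤ (400*m^2 + 4*m*(m+ν/6))/(((n:ℝ)*ν)^2*(2*ℓ)) := by
        rw [le_div_iff₀ (by positivity : (0:ℝ) < ((n:ℝ)*ν)^2*(2*ℓ))]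
        calc ‖z n - ((n:ℂ)*ν - I*μ/((n:ℂ)*Real.pi))‖ * (((n:ℝ)*ν)^2*(2*ℓ))
            = 2*ℓ*‖z n - ((n:ℂ)*ν - I*μ/((n:ℂ)*Real.pi))‖ * ((n:ℝ)*ν)^2 := by
              ring
          _ ≤ _ := h2
      refine le_trans h3 (le_of_eq ?_)
      have hden : ((n:ℝ)*ν)^2*(2*ℓ) = (2*ℓ*ν^2)*(n:ℝ)^2 := by ring
      rw [hC₃, div_div]
      rw [hden]
    refine ⟨hbound1, ?_⟩
    set a : ℂ := (n:ℂ)*ν - I*μ/((n:ℂ)*Real.pi) with ha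
    set r : ℂ := z n - a with hr
    have hrabs : ‖r‖ ≤ C₃/(n:ℝ)^2 := hbound1
    have ha2 : a^2 = (n:ℂ)^2*(ν:ℂ)^2 - 2*I*μ/ℓ - μ^2/((n:ℂ)*(Real.pi:ℝ))^2 := by
      rw [ha, ← hνℓC]
      field_simp
      linear_combination μ^2 * Complex.I_sq
    have hid2 : (z n)^2 - ((n:ℂ)^2*(ν:ℂ)^2 - 2*I*μ/ℓ)
        = r^2 + 2*a*r - μ^2/((n:ℂ)*(Real.pi:ℝ))^2 := by
      rw [hr]
      linear_combination ha2
    have hnπ1 : (1:ℝ) ≤ (n:ℝ)*Real.pi := by nlinarith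
    have habs_a : ‖a‖ ≤ (n:ℝ)*(ν+m) := by
      rw [ha]
      refine le_trans (cabs_sub_le' _ _) ?_
      have e1 : ‖(n:ℂ)*(ν:ℝ)‖ = (n:ℝ)*ν := by
        rw [norm_mul, Complex.norm_natCast, Complex.norm_real, Real.norm_eq_abs, abs_of_pos hν0]
      have e2 : ‖I*μ/((n:ℂ)*Real.pi)‖ = m/((n:ℝ)*Real.pi) := by
        rw [norm_div, norm_mul, norm_mul, Complex.norm_I, Complex.norm_natCast,
          Complex.norm_real, Real.norm_eq_abs, abs_of_pos hπ0, one_mul]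
      rw [e1, e2]
      have e3 : m/((n:ℝ)*Real.pi) ≤ m := by
        rw [div_le_iff₀ (by positivity)]
        nlinarith [mul_le_mul_of_nonneg_left hnπ1 hm0]
      nlinarith [mul_le_mul_of_nonneg_right h1n hm0]
    have hbound2 : ‖(z n)^2 - ((n:ℂ)^2*(ν:ℂ)^2 - 2*I*μ/ℓ)‖ ≤ C₄/(n:ℝ) := by
      rw [hid2]
      refine le_trans (cabs_sub_le' _ _) ?_
      refine le_trans (add_le_add_left (norm_add_le _ _) _) ?_
      have t1 : ‖r^2‖ ≤ C₃^2/(n:ℝ) := by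
        rw [norm_pow]
        have h4 : (n:ℝ) ≤ ((n:ℝ)^2)^2 := by
          have := le_self_pow₀ h1n (by norm_num : 4 ≠ 0)
          calc (n:ℝ) ≤ (n:ℝ)^4 := this
            _ = ((n:ℝ)^2)^2 := by ring
        calc ‖r‖ ^ 2 ≤ (C₃/(n:ℝ)^2)^2 :=
              pow_le_pow_left₀ (norm_nonneg r) hrabs 2
          _ = C₃^2/((n:ℝ)^2)^2 := by rw [div_pow]
          _ ≤ C₃^2/(n:ℝ) := by gcongr
      have t2 : ‖2*a*r‖ ≤ 2*(ν+m)*C₃/(n:ℝ) := by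
        rw [norm_mul, norm_mul, Complex.norm_two]
        calc 2 * ‖a‖ * ‖r‖ ≤ 2 * ((n:ℝ)*(ν+m)) * (C₃/(n:ℝ)^2) := by
              gcongr
          _ = 2*(ν+m)*C₃/(n:ℝ) := by
              field_simp
      have t3 : ‖μ^2/((n:ℂ)*(Real.pi:ℝ))^2‖ ≤ m^2/(n:ℝ) := by
        rw [norm_div, norm_pow, norm_pow, norm_mul, Complex.norm_natCast, Complex.norm_real, Real.norm_eq_abs,
          abs_of_pos hπ0]
        have h5 : (n:ℝ) ≤ ((n:ℝ)*Real.pi)^2 := by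
          have := le_self_pow₀ hnπ1 (by norm_num : 2 ≠ 0)
          nlinarith
        gcongr
      calc ‖r^2‖ + ‖2*a*r‖ + ‖μ^2/((n:ℂ)*(Real.pi:ℝ))^2‖
          ≤ C₃^2/(n:ℝ) + 2*(ν+m)*C₃/(n:ℝ) + m^2/(n:ℝ) := add_le_add (add_le_add t1 t2) t3
        _ = (C₃^2 + 2*(ν+m)*C₃ + m^2)/(n:ℝ) := by rw [← add_div, ← add_div]
        _ = C₄/(n:ℝ) := by rw [hC₄]; ring_nf
    exact hbound2
  have hCpos : (0:ℝ) < C₃ + C₄ + 1 := by positivity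
  refine ⟨C₃ + C₄ + 1, hCpos, ?_, ?_⟩
  · filter_upwards [key] with n hk
    refine le_trans hk.1 ?_
    gcongr
    linarith
  · filter_upwards [key] with n hk
    refine le_trans hk.2 ?_
    gcongr
    linarith
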